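/- Let θ ∈ ℝ^d be such that y_i a_iᵀθ ≤ 0 for at least one i ∈ [n]. Then −β(θ) · θᵀ ∇f(θ) ≤ log(2n − 1), where β(θ) := ((1/n) Σ_{i=1}^n (1 + exp(y_i a_iᵀθ))^{−1})^{−1} and ∇f(θ) = −(1/n) Σ_{i=1}^n (1 + exp(y_i a_iᵀθ))^{−1} y_i a_i. -/

import Mathlib

open scoped RealInnerProductSpace BigOperators

/-- The gradient of the logistic loss `f(θ) = (1/n) Σ_i log(1 + exp(-y_i aᵢᵀθ))`. -/
noncomputable def logisticGrad {d n : ℕ} (a : Fin n → EuclideanSpace ℝ (Fin d))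
    (y : Fin n → ℝ) (θ : EuclideanSpace ℝ (Fin d)) : EuclideanSpace ℝ (Fin d) :=
  -(((1 : ℝ) / n) • ∑ i, ((1 + Real.exp (y i * ⟪a i, θ⟫))⁻¹ * y i) • a i)

/-- The normalization factor `β(θ) = ((1/n) Σ_i (1 + exp(y_i aᵢᵀθ))⁻¹)⁻¹`. -/
noncomputable def logisticBeta {d n : ℕ} (a : Fin n → EuclideanSpace ℝ (Fin d))
    (y : Fin n → ℝ) (θ : EuclideanSpace ℝ (Fin d)) : ℝ :=
  (((1 : ℝ) / n) * ∑ i, (1 + Real.exp (y i * ⟪a i, θ⟫))⁻¹)⁻¹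

/-- **Correlation bound at a non-separating point.** If some sample is misclassified at
`θ` (i.e. `y_i aᵢᵀθ ≤ 0` for some `i`), then `−β(θ) ⟨θ, ∇f(θ)⟩ ≤ log(2n − 1)`. -/
theorem beta_inner_self_logisticGrad_le {d n : ℕ}
    (a : Fin n → EuclideanSpace ℝ (Fin d)) (y : Fin n → ℝ)
    (hy : ∀ i, y i = 1 ∨ y i = -1)
    (θ : EuclideanSpace ℝ (Fin d))
    (hmis : ∃ i, y i * ⟪a i, θ⟫ ≤ 0) :
    -(logisticBeta a y θ * ⟪θ, logisticGrad a y θ⟫) ≤ Real.log (2 * n - 1) := by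
  obtain ⟨j, hj⟩ := hmis
  have : Nonempty (Fin n) := ⟨j⟩
  have hn : 0 < (n : ℝ) := by exact_mod_cast j.pos
  set s : Fin n → ℝ := fun i => y i * ⟪a i, θ⟫ with hsdef
  set g : Fin n → ℝ := fun i => (1 + Real.exp (s i))⁻¹ with hgdef
  have hgpos : ∀ i, 0 < g i := fun i => by
    have := Real.exp_pos (s i); rw [hgdef]; positivity
  have hg1 : ∀ i, g i < 1 := fun i => by
    have := Real.exp_pos (s i)
    rw [hgdef]
    simp only
    rw [inv_lt_one_iff₀]
    right; linarith
  set S : ℝ := ∑ i, g i with hSdef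
  have hSpos : 0 < S := Finset.sum_pos (fun i _ => hgpos i) Finset.univ_nonempty
  have hShalf : 1 / 2 ≤ S := by
    have hgj : 1 / 2 ≤ g j := by
      have hexp : Real.exp (s j) ≤ 1 := Real.exp_le_one_iff.mpr hj
      have h2 : (0:ℝ) < 1 + Real.exp (s j) := by positivity
      rw [hgdef]
      simp only
      rw [le_inv_comm₀ (by norm_num) h2]
      linarith
    calc 1 / 2 ≤ g j := hgj
      _ ≤ S := Finset.single_le_sum (fun i _ => (hgpos i).le) (Finset.mem_univ j)
  have hSn : S < n := by
    calc S < ∑ _i : Fin n, (1:ℝ) :=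
          Finset.sum_lt_sum_of_nonempty Finset.univ_nonempty (fun i _ => hg1 i)
      _ = n := by simp
  have hnS : 0 < (n : ℝ) - S := by linarith
  set c : ℝ := ((n : ℝ) - S) / S with hcdef
  have hcpos : 0 < c := div_pos hnS hSpos
  -- key sum identity : ∑ g i * exp (s i) = n - S
  have hkey : ∑ i, g i * Real.exp (s i) = (n : ℝ) - S := by
    have : ∀ i, g i * Real.exp (s i) = 1 - g i := fun i => by
      have h2 : (1 + Real.exp (s i)) ≠ 0 := by positivity
      rw [hgdef]; field_simp; ring
    rw [Finset.sum_congr rfl (fun i _ => this i), Finset.sum_sub_distrib]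
    simp [hSdef]
  -- per-term bound
  have hterm : ∀ i, g i * s i ≤ g i * (Real.log c + Real.exp (s i) / c - 1) := by
    intro i
    have hx : 0 < Real.exp (s i) / c := by positivity
    have hlog := Real.log_le_sub_one_of_pos hx
    rw [Real.log_div (Real.exp_ne_zero _) (ne_of_gt hcpos), Real.log_exp] at hlog
    have hsle : s i ≤ Real.log c + Real.exp (s i) / c - 1 := by linarith
    exact mul_le_mul_of_nonneg_left hsle (hgpos i).le
  set T : ℝ := ∑ i, g i * s i with hTdef
  have hT : T ≤ S * Real.log c := by
    have h1 : T ≤ ∑ i, g i * (Real.log c + Real.exp (s i) / c - 1) :=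
      Finset.sum_le_sum (fun i _ => hterm i)
    have h2 : ∑ i, g i * (Real.log c + Real.exp (s i) / c - 1)
        = S * Real.log c + (∑ i, g i * Real.exp (s i)) / c - S := by
      rw [Finset.sum_congr rfl (fun i _ => by ring :
        ∀ i ∈ Finset.univ, g i * (Real.log c + Real.exp (s i) / c - 1)
          = g i * Real.log c + (g i * Real.exp (s i)) / c - g i)]
      rw [Finset.sum_sub_distrib, Finset.sum_add_distrib, ← Finset.sum_mul,
        ← Finset.sum_div]
    rw [h2, hkey] at h1
    have : ((n : ℝ) - S) / c = S := by
      rw [hcdef]; field_simp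
    rw [this] at h1
    linarith
  have hc_le : c ≤ 2 * n - 1 := by
    rw [hcdef, div_le_iff₀ hSpos]
    nlinarith
  have hlogc : Real.log c ≤ Real.log (2 * n - 1) :=
    Real.log_le_log hcpos hc_le
  -- compute the inner product
  have hinner : ⟪θ, logisticGrad a y θ⟫ = -((1 / (n : ℝ)) * T) := by
    rw [logisticGrad, inner_neg_right, inner_smul_right, inner_sum]
    congr 2
    refine Finset.sum_congr rfl fun i _ => ?_
    rw [real_inner_smul_right]
    simp only [hgdef, hsdef, real_inner_comm θ (a i)]
    ring
  have hbeta : logisticBeta a y θ = ((1 / (n : ℝ)) * S)⁻¹ := by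
    rw [logisticBeta]
  rw [hinner, hbeta]
  have hn' : (n : ℝ) ≠ 0 := ne_of_gt hn
  have hS' : S ≠ 0 := ne_of_gt hSpos
  have hrw : -(((1 / (n : ℝ)) * S)⁻¹ * -((1 / (n : ℝ)) * T)) = T / S := by
    rw [mul_neg, neg_neg, mul_inv, one_div, inv_inv]
    field_simp
  rw [hrw]
  calc T / S ≤ (S * Real.log c) / S :=
        div_le_div_of_nonneg_right hT hSpos.le
      _ = Real.log c := mul_div_cancel_left₀ _ hS'
      _ ≤ Real.log (2 * n - 1) := hlogc
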